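/- Lemma 3.2 (coefficient-wise form): for every n ≥ 0 and every i ≥ 1, ∑_{p=1}^{n} (−1)^p a_{n,p} c_{p,i−1}(q) = (1/(q² − q^{−2})) ∑_{k=1}^{i} α_k^{(i)} f_n(−q^{2(2k−1)}), where α_k^{(i)} := (−1)^{i−k} [2i−1 choose i−k]_{q²}. -/

import Mathlib

/- STATEMENT 10: Lemma 3.2 (coefficient-wise form): for every n ≥ 0 and every i ≥ 1,
∑_{p=1}^{n} (−1)^p a_{n,p} c_{p,i−1}(q)
  = (1/(q² − q^{−2})) ∑_{k=1}^{i} α_k^{(i)} f_n(−q^{2(2k−1)}),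
where α_k^{(i)} = (−1)^{i−k} [2i−1 choose i−k]_{q²}. -/

noncomputable section

/-- The field `F = ℚ(q, t₁, t₂)` of rational functions in three indeterminates. -/
abbrev F : Type := FractionRing (MvPolynomial (Fin 3) ℚ)

def q : F := algebraMap (MvPolynomial (Fin 3) ℚ) F (MvPolynomial.X 0)
def t1 : F := algebraMap (MvPolynomial (Fin 3) ℚ) F (MvPolynomial.X 1)
def t2 : F := algebraMap (MvPolynomial (Fin 3) ℚ) F (MvPolynomial.X 2)

/-- `A_p = (q^{2p−1}t₁^{−1} − q^{1−2p}t₁ + t₂ − t₂^{−1})/(q^{2p−1} − q^{1−2p})`. -/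
def A (p : ℤ) : F :=
  (q ^ (2 * p - 1) * t1⁻¹ - q ^ (1 - 2 * p) * t1 + t2 - t2⁻¹) /
    (q ^ (2 * p - 1) - q ^ (1 - 2 * p))

/-- The coefficients `a_{n,p}` defined by the DAHA recurrence. -/
def a : ℕ → ℤ → F
  | 0, _ => 0
  | 1, p => if p = 1 then 1 else if p = -1 then -1 else 0
  | n + 2, p =>
      A p * a (n + 1) (p - 1) + (A p - A (p + 1)) * a (n + 1) p
        + A (-p) * a (n + 1) (p + 1) - a n p

/-- The classical cyclotomic coefficient `c_{n,i−1}(q)`: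
`(1/(q² − q^{−2})) ∏_{p=n−i+1}^{n+i−1} (q^{2p} − q^{−2p})` for `1 ≤ i ≤ n`, and `0` for `i > n`. -/
def cyc (n i : ℕ) : F :=
  if 1 ≤ i ∧ i ≤ n then
    (q ^ (2 : ℤ) - q ^ (-2 : ℤ))⁻¹ *
      ∏ p ∈ Finset.Icc ((n : ℤ) - i + 1) ((n : ℤ) + i - 1), (q ^ (2 * p) - q ^ (-(2 * p)))
  else 0

/-- The balanced q-binomial coefficient `[n choose m]_{q²}`. -/
def qbinom (n m : ℕ) : F :=
  ∏ k ∈ Finset.range m,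
    (q ^ (2 * ((n : ℤ) - k)) - q ^ (-(2 * ((n : ℤ) - k)))) /
      (q ^ (2 * ((m : ℤ) - k)) - q ^ (-(2 * ((m : ℤ) - k))))

/-- `α_k^{(i)} = (−1)^{i−k} [2i−1 choose i−k]_{q²}`. -/
def alpha (i k : ℕ) : F := (-1 : F) ^ (i - k) * qbinom (2 * i - 1) (i - k)

/-- The evaluation `f_n(c)` of `f_n = ∑_{p=1}^{n} a_{n,p}(U^p − U^{−p})` at `U = c`. -/
def fev (n : ℕ) (c : F) : F :=
  ∑ p ∈ Finset.Icc (1 : ℤ) (n : ℤ), a n p * (c ^ p - c ^ (-p))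


-- ===== auxiliary development =====

lemma hq0 : q ≠ 0 := by
  have : Function.Injective (algebraMap (MvPolynomial (Fin 3) ℚ) F) :=
    IsFractionRing.injective _ _
  intro h
  exact MvPolynomial.X_ne_zero 0 (this (by simpa [q, map_zero] using h))

/-- The balanced q-integer building block. -/
def D (a : ℤ) : F := q ^ (2 * a) - q ^ (-(2 * a))

lemma q_pow_ne_one {m : ℕ} (hm : m ≠ 0) : q ^ m ≠ 1 := by
  have hinj : Function.Injective (algebraMap (MvPolynomial (Fin 3) ℚ) F) :=
    IsFractionRing.injective _ _
  intro h
  have : (MvPolynomial.X 0 : MvPolynomial (Fin 3) ℚ) ^ m = 1 := by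
    apply hinj; simpa [q, map_pow] using h
  have h0 := congrArg MvPolynomial.constantCoeff this
  simp [MvPolynomial.constantCoeff_X, zero_pow hm] at h0

lemma D_ne_zero {a : ℤ} (ha : 0 < a) : D a ≠ 0 := by
  intro h
  have he : q ^ (2 * a) = q ^ (-(2 * a)) := sub_eq_zero.mp h
  have h2 : q ^ (2 * a) * q ^ (2 * a) = q ^ (-(2 * a)) * q ^ (2 * a) := by rw [he]
  rw [← zpow_add₀ hq0, ← zpow_add₀ hq0] at h2
  have h3 : q ^ (4 * a) = 1 := by
    rw [show (4 : ℤ) * a = 2 * a + 2 * a by ring, h2]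
    norm_num
  have h4 : q ^ ((4 * a).toNat) = 1 := by
    rw [← zpow_natCast q, Int.toNat_of_nonneg (by omega)]; exact h3
  exact q_pow_ne_one (by omega) h4

lemma qbinom_def (n m : ℕ) :
    qbinom n m = ∏ k ∈ Finset.range m, (D ((n : ℤ) - k) / D ((m : ℤ) - k)) := rfl

lemma qbinom_zero (n : ℕ) : qbinom n 0 = 1 := by simp [qbinom_def]

lemma qbinom_eq_zero {n m : ℕ} (h : n < m) : qbinom n m = 0 := by
  rw [qbinom_def]
  apply Finset.prod_eq_zero (Finset.mem_range.mpr h)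
  simp [D]

lemma qbinom_R1 (m k : ℕ) :
    qbinom (m + 1) (k + 1) = D ((m : ℤ) + 1) / D ((k : ℤ) + 1) * qbinom m k := by
  rw [qbinom_def, qbinom_def, Finset.prod_range_succ']
  have h1 : ∀ x : ℕ, D (((m + 1 : ℕ) : ℤ) - ((x + 1 : ℕ) : ℤ)) / D (((k + 1 : ℕ) : ℤ) - ((x + 1 : ℕ) : ℤ))
      = D ((m : ℤ) - x) / D ((k : ℤ) - x) := by
    intro x
    have e1 : ((m + 1 : ℕ) : ℤ) - ((x + 1 : ℕ) : ℤ) = (m : ℤ) - x := by push_cast; ring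
    have e2 : ((k + 1 : ℕ) : ℤ) - ((x + 1 : ℕ) : ℤ) = (k : ℤ) - x := by push_cast; ring
    rw [e1, e2]
  have h0 : D (((m + 1 : ℕ) : ℤ) - ((0 : ℕ) : ℤ)) / D (((k + 1 : ℕ) : ℤ) - ((0 : ℕ) : ℤ))
      = D ((m : ℤ) + 1) / D ((k : ℤ) + 1) := by
    have e1 : ((m + 1 : ℕ) : ℤ) - ((0 : ℕ) : ℤ) = (m : ℤ) + 1 := by push_cast; ring
    have e2 : ((k + 1 : ℕ) : ℤ) - ((0 : ℕ) : ℤ) = (k : ℤ) + 1 := by push_cast; ring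
    rw [e1, e2]
  simp only [h1, h0]
  exact mul_comm _ _

lemma qbinom_R2 (m k : ℕ) :
    qbinom m (k + 1) = D ((m : ℤ) - k) / D ((k : ℤ) + 1) * qbinom m k := by
  have hnum : ∏ j ∈ Finset.range (k + 1), D ((m : ℤ) - j)
      = (∏ j ∈ Finset.range k, D ((m : ℤ) - j)) * D ((m : ℤ) - k) :=
    Finset.prod_range_succ _ _
  have hden : ∏ j ∈ Finset.range (k + 1), D (((k : ℤ) + 1) - j)
      = (∏ j ∈ Finset.range k, D ((k : ℤ) - j)) * D ((k : ℤ) + 1) := by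
    rw [Finset.prod_range_succ']
    have h1 : ∀ x : ℕ, D (((k : ℤ) + 1) - ((x + 1 : ℕ) : ℤ)) = D ((k : ℤ) - x) := by
      intro x; congr 1; push_cast; ring
    have h0 : D (((k : ℤ) + 1) - ((0 : ℕ) : ℤ)) = D ((k : ℤ) + 1) := by
      norm_num
    simp only [h1, h0]
  rw [qbinom_def, qbinom_def, Finset.prod_div_distrib, Finset.prod_div_distrib]
  have hcast : ∀ j : ℕ, (((k + 1 : ℕ) : ℤ) - j) = ((k : ℤ) + 1) - j := by
    intro j; push_cast; ring
  simp only [hcast]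
  rw [hnum, hden, div_mul_div_comm, mul_comm (D ((m:ℤ) - k)) _, mul_comm (D ((k:ℤ) + 1)) _]

lemma D_pascal (m k : ℤ) :
    D (m + 1) = q ^ (2 * (m - k)) * D (k + 1) + q ^ (-(2 * (k + 1))) * D (m - k) := by
  simp only [D, mul_sub, ← zpow_add₀ hq0]
  ring_nf

lemma qbinom_pascal (m k : ℕ) :
    qbinom (m + 1) (k + 1)
      = q ^ (2 * ((m : ℤ) - k)) * qbinom m k
        + q ^ (-(2 * ((k : ℤ) + 1))) * qbinom m (k + 1) := by
  have hD : D ((k : ℤ) + 1) ≠ 0 := D_ne_zero (by positivity)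
  have hs : D ((m : ℤ) + 1) / D ((k : ℤ) + 1)
      = q ^ (2 * ((m : ℤ) - k)) + q ^ (-(2 * ((k : ℤ) + 1))) * (D ((m : ℤ) - k) / D ((k : ℤ) + 1)) := by
    rw [div_eq_iff hD, add_mul, mul_assoc, div_mul_cancel₀ _ hD]
    exact D_pascal (m : ℤ) (k : ℤ)
  rw [qbinom_R1, qbinom_R2, hs]
  ring

def Dfact (n : ℕ) : F := ∏ j ∈ Finset.range n, D ((j : ℤ) + 1)

lemma Dfact_ne_zero (n : ℕ) : Dfact n ≠ 0 := by
  apply Finset.prod_ne_zero_iff.mpr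
  intro j hj
  exact D_ne_zero (by positivity)

lemma Dfact_succ (n : ℕ) : Dfact (n + 1) = Dfact n * D ((n : ℤ) + 1) :=
  Finset.prod_range_succ _ _

lemma qbinom_fact {m k : ℕ} (h : k ≤ m) :
    qbinom m k = Dfact m / (Dfact k * Dfact (m - k)) := by
  induction k with
  | zero =>
      rw [qbinom_zero]
      have : Dfact 0 = 1 := Finset.prod_range_zero _
      rw [this, Nat.sub_zero, one_mul, div_self (Dfact_ne_zero m)]
  | succ k ih =>
      have hk : k ≤ m := by omega
      have h2 : Dfact (m - k) = Dfact (m - (k + 1)) * D ((m : ℤ) - k) := by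
        have e : m - k = (m - (k + 1)) + 1 := by omega
        rw [e, Dfact_succ]
        congr 2
        have : ((m - (k + 1) : ℕ) : ℤ) = (m : ℤ) - k - 1 := by
          push_cast [Nat.cast_sub h]; ring
        rw [this]; ring
      have hDk : D ((k : ℤ) + 1) ≠ 0 := D_ne_zero (by positivity)
      have hDmk : D ((m : ℤ) - k) ≠ 0 := D_ne_zero (by
        have : (k : ℤ) < m := by exact_mod_cast h
        omega)
      have hne1 : D ((k : ℤ) + 1) * (Dfact k * (Dfact (m - (k + 1)) * D ((m : ℤ) - k))) ≠ 0 :=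
        mul_ne_zero hDk (mul_ne_zero (Dfact_ne_zero _) (mul_ne_zero (Dfact_ne_zero _) hDmk))
      have hne2 : Dfact k * D ((k : ℤ) + 1) * Dfact (m - (k + 1)) ≠ 0 :=
        mul_ne_zero (mul_ne_zero (Dfact_ne_zero _) hDk) (Dfact_ne_zero _)
      rw [qbinom_R2, ih hk, h2, Dfact_succ, div_mul_div_comm, div_eq_div_iff hne1 hne2]
      ring

lemma qbinom_symm {m k : ℕ} (h : k ≤ m) : qbinom m k = qbinom m (m - k) := by
  rw [qbinom_fact h, qbinom_fact (Nat.sub_le m k), Nat.sub_sub_self h, mul_comm]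

lemma neg_one_pow_parity (a b : ℕ) (h : a % 2 = b % 2) : ((-1 : F)) ^ a = (-1) ^ b := by
  conv_lhs => rw [← Nat.div_add_mod a 2]
  conv_rhs => rw [← Nat.div_add_mod b 2]
  rw [pow_add, pow_add, pow_mul, pow_mul, neg_one_sq, one_pow, one_pow, h]

lemma thmB (m : ℕ) (y : F) (hy : y ≠ 0) :
    ∏ l ∈ Finset.range m, (y * q ^ (2 * (l : ℤ) - m + 1) - y⁻¹ * q ^ (-(2 * (l : ℤ) - m + 1)))
      = ∑ k ∈ Finset.range (m + 1), (-1 : F) ^ (m + k) * qbinom m k * y ^ (2 * (k : ℤ) - m) := by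
  induction m generalizing y hy with
  | zero => simp [qbinom_zero]
  | succ m ih =>
      have hyq : y * q⁻¹ ≠ 0 := mul_ne_zero hy (inv_ne_zero hq0)
      have hprod :
          ∏ l ∈ Finset.range (m + 1),
              (y * q ^ (2 * (l : ℤ) - ((m + 1 : ℕ) : ℤ) + 1)
                - y⁻¹ * q ^ (-(2 * (l : ℤ) - ((m + 1 : ℕ) : ℤ) + 1)))
            = (∏ l ∈ Finset.range m,
                ((y * q⁻¹) * q ^ (2 * (l : ℤ) - (m : ℤ) + 1)
                  - (y * q⁻¹)⁻¹ * q ^ (-(2 * (l : ℤ) - (m : ℤ) + 1))))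
              * (y * q ^ (m : ℤ) - y⁻¹ * q ^ (-(m : ℤ))) := by
        rw [Finset.prod_range_succ]
        congr 1
        · refine Finset.prod_congr rfl fun l hl => ?_
          have h1 : q ^ (2 * (l : ℤ) - ((m + 1 : ℕ) : ℤ) + 1)
              = q ^ (2 * (l : ℤ) - (m : ℤ) + 1) * q⁻¹ := by
            rw [show (2 * (l : ℤ) - ((m + 1 : ℕ) : ℤ) + 1)
                = (2 * (l : ℤ) - (m : ℤ) + 1) + (-1) by push_cast; ring,
              zpow_add₀ hq0, zpow_neg_one]
          have h2 : q ^ (-(2 * (l : ℤ) - ((m + 1 : ℕ) : ℤ) + 1))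
              = q ^ (-(2 * (l : ℤ) - (m : ℤ) + 1)) * q := by
            rw [show (-(2 * (l : ℤ) - ((m + 1 : ℕ) : ℤ) + 1))
                = (-(2 * (l : ℤ) - (m : ℤ) + 1)) + 1 by push_cast; ring,
              zpow_add₀ hq0, zpow_one]
          have h3 : (y * q⁻¹)⁻¹ = y⁻¹ * q := by rw [mul_inv, inv_inv]
          rw [h1, h2, h3]
          ring
        · have e : (2 * ((m : ℕ) : ℤ) - ((m + 1 : ℕ) : ℤ) + 1) = (m : ℤ) := by push_cast; ring
          rw [e]
      rw [hprod, ih _ hyq, Finset.sum_mul]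
      have hexp : ∀ k ∈ Finset.range (m + 1),
          ((-1 : F) ^ (m + k) * qbinom m k * (y * q⁻¹) ^ (2 * (k : ℤ) - m))
              * (y * q ^ (m : ℤ) - y⁻¹ * q ^ (-(m : ℤ)))
            = (-1 : F) ^ (m + k) * qbinom m k * q ^ (2 * (m : ℤ) - 2 * k) * y ^ (2 * (k : ℤ) - m + 1)
              - (-1 : F) ^ (m + k) * qbinom m k * q ^ (-(2 * (k : ℤ))) * y ^ (2 * (k : ℤ) - m - 1) := by
        intro k hk
        have h1 : (y * q⁻¹) ^ (2 * (k : ℤ) - m) = y ^ (2 * (k : ℤ) - m) * q ^ (-(2 * (k : ℤ) - m)) := by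
          rw [mul_zpow, inv_zpow, ← zpow_neg]
        have hy1 : y ^ (2 * (k : ℤ) - m + 1) = y ^ (2 * (k : ℤ) - m) * y := by
          rw [← zpow_add_one₀ hy]
        have hy2 : y ^ (2 * (k : ℤ) - m - 1) = y ^ (2 * (k : ℤ) - m) * y⁻¹ := by
          rw [← zpow_sub_one₀ hy]
        have hq1 : q ^ (2 * (m : ℤ) - 2 * k) = q ^ (-(2 * (k : ℤ) - m)) * q ^ (m : ℤ) := by
          rw [← zpow_add₀ hq0]; congr 1; ring
        have hq2 : q ^ (-(2 * (k : ℤ))) = q ^ (-(2 * (k : ℤ) - m)) * q ^ (-(m : ℤ)) := by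
          rw [← zpow_add₀ hq0]; congr 1; ring
        rw [h1, hy1, hy2, hq1, hq2]
        ring
      rw [Finset.sum_congr rfl hexp, Finset.sum_sub_distrib]
      have hpas : ∀ k ∈ Finset.range (m + 1),
          (-1 : F) ^ ((m + 1) + (k + 1)) * qbinom (m + 1) (k + 1)
              * y ^ (2 * ((k + 1 : ℕ) : ℤ) - ((m + 1 : ℕ) : ℤ))
            = (-1 : F) ^ (m + k) * qbinom m k * q ^ (2 * (m : ℤ) - 2 * k) * y ^ (2 * (k : ℤ) - m + 1)
              + (-1 : F) ^ (m + k) * qbinom m (k + 1) * q ^ (-(2 * (k : ℤ) + 2))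
                  * y ^ (2 * (k : ℤ) - m + 1) := by
        intro k hk
        have hsign : ((-1 : F)) ^ ((m + 1) + (k + 1)) = (-1) ^ (m + k) :=
          neg_one_pow_parity _ _ (by omega)
        have hyexp : (2 * ((k + 1 : ℕ) : ℤ) - ((m + 1 : ℕ) : ℤ)) = 2 * (k : ℤ) - m + 1 := by
          push_cast; ring
        have hqe1 : q ^ (2 * ((m : ℤ) - k)) = q ^ (2 * (m : ℤ) - 2 * k) := by
          rw [show (2 * ((m : ℤ) - k)) = 2 * (m : ℤ) - 2 * k by ring]
        have hqe2 : q ^ (-(2 * ((k : ℤ) + 1))) = q ^ (-(2 * (k : ℤ) + 2)) := by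
          rw [show (-(2 * ((k : ℤ) + 1))) = -(2 * (k : ℤ) + 2) by ring]
        rw [hsign, hyexp, qbinom_pascal, hqe1, hqe2]
        ring
      have hS2 : (∑ k ∈ Finset.range (m + 1),
            (-1 : F) ^ (m + k) * qbinom m (k + 1) * q ^ (-(2 * (k : ℤ) + 2)) * y ^ (2 * (k : ℤ) - m + 1))
          = ∑ k ∈ Finset.range m,
            (-1 : F) ^ (m + k) * qbinom m (k + 1) * q ^ (-(2 * (k : ℤ) + 2)) * y ^ (2 * (k : ℤ) - m + 1) := by
        rw [Finset.sum_range_succ, qbinom_eq_zero (Nat.lt_succ_self m)]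
        simp
      have hT2 : (∑ k ∈ Finset.range (m + 1),
            (-1 : F) ^ (m + k) * qbinom m k * q ^ (-(2 * (k : ℤ))) * y ^ (2 * (k : ℤ) - m - 1))
          = (∑ k ∈ Finset.range m,
              (-1 : F) ^ (m + (k + 1)) * qbinom m (k + 1) * q ^ (-(2 * ((k + 1 : ℕ) : ℤ)))
                * y ^ (2 * ((k + 1 : ℕ) : ℤ) - m - 1))
            + (-1 : F) ^ (m + 0) * qbinom m 0 * q ^ (-(2 * ((0 : ℕ) : ℤ)))
                * y ^ (2 * ((0 : ℕ) : ℤ) - m - 1) :=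
        Finset.sum_range_succ' _ _
      have hmatch : ∀ k ∈ Finset.range m,
          (-1 : F) ^ (m + (k + 1)) * qbinom m (k + 1) * q ^ (-(2 * ((k + 1 : ℕ) : ℤ)))
              * y ^ (2 * ((k + 1 : ℕ) : ℤ) - m - 1)
            = -((-1 : F) ^ (m + k) * qbinom m (k + 1) * q ^ (-(2 * (k : ℤ) + 2))
                * y ^ (2 * (k : ℤ) - m + 1)) := by
        intro k hk
        have hsign : ((-1 : F)) ^ (m + (k + 1)) = -((-1) ^ (m + k)) := by
          rw [show m + (k + 1) = (m + k) + 1 by omega, pow_succ]; ring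
        have he1 : (-(2 * ((k + 1 : ℕ) : ℤ))) = -(2 * (k : ℤ) + 2) := by push_cast; ring
        have he2 : (2 * ((k + 1 : ℕ) : ℤ) - m - 1) = 2 * (k : ℤ) - m + 1 := by push_cast; ring
        rw [hsign, he1, he2]
        ring
      conv_rhs => rw [Finset.sum_range_succ']
      rw [Finset.sum_congr rfl hpas, Finset.sum_add_distrib, hS2, hT2,
        Finset.sum_congr rfl hmatch, Finset.sum_neg_distrib]
      have hg0 : (-1 : F) ^ ((m + 1) + 0) * qbinom (m + 1) 0
            * y ^ (2 * ((0 : ℕ) : ℤ) - ((m + 1 : ℕ) : ℤ))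
          = -((-1 : F) ^ (m + 0) * qbinom m 0 * q ^ (-(2 * ((0 : ℕ) : ℤ)))
            * y ^ (2 * ((0 : ℕ) : ℤ) - m - 1)) := by
        rw [qbinom_zero, qbinom_zero]
        have hsign : ((-1 : F)) ^ ((m + 1) + 0) = -((-1) ^ (m + 0)) := by
          rw [Nat.add_zero, Nat.add_zero, pow_succ]; ring
        have he : (2 * ((0 : ℕ) : ℤ) - ((m + 1 : ℕ) : ℤ)) = 2 * ((0 : ℕ) : ℤ) - m - 1 := by
          push_cast; ring
        rw [hsign, he]
        simp
      rw [hg0]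
      ring

lemma cyc_eq (p i : ℕ) (hp : 1 ≤ p) (hi : 1 ≤ i) :
    cyc p i = (q ^ (2 : ℤ) - q ^ (-2 : ℤ))⁻¹ *
      ∏ j ∈ Finset.Icc ((p : ℤ) - i + 1) ((p : ℤ) + i - 1), (q ^ (2 * j) - q ^ (-(2 * j))) := by
  rw [cyc]
  by_cases h : i ≤ p
  · rw [if_pos ⟨hi, h⟩]
  · rw [if_neg (by tauto)]
    have h0 : (0 : ℤ) ∈ Finset.Icc ((p : ℤ) - i + 1) ((p : ℤ) + i - 1) := by
      rw [Finset.mem_Icc]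
      constructor <;> omega
    rw [Finset.prod_eq_zero h0 (by norm_num), mul_zero]

lemma key (p i : ℕ) (hp : 1 ≤ p) (hi : 1 ≤ i) :
    (-1 : F) ^ p * cyc p i
      = (q ^ (2 : ℤ) - q ^ (-2 : ℤ))⁻¹ *
          ∑ k ∈ Finset.Icc 1 i,
            alpha i k * ((-(q ^ (2 * (2 * (k : ℤ) - 1)))) ^ (p : ℤ)
              - (-(q ^ (2 * (2 * (k : ℤ) - 1)))) ^ (-(p : ℤ))) := by
  have hy : (q ^ (2 * (p : ℤ))) ≠ 0 := zpow_ne_zero _ hq0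
  have hcast : ((2 * i - 1 : ℕ) : ℤ) = 2 * (i : ℤ) - 1 := by omega
  -- Step A: reindex the cyclotomic product
  have hA : ∏ j ∈ Finset.Icc ((p : ℤ) - i + 1) ((p : ℤ) + i - 1), (q ^ (2 * j) - q ^ (-(2 * j)))
      = ∏ l ∈ Finset.range (2 * i - 1),
          ((q ^ (2 * (p : ℤ))) * q ^ (2 * (l : ℤ) - ((2 * i - 1 : ℕ) : ℤ) + 1)
            - (q ^ (2 * (p : ℤ)))⁻¹ * q ^ (-(2 * (l : ℤ) - ((2 * i - 1 : ℕ) : ℤ) + 1))) := by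
    refine Finset.prod_nbij' (fun j => (j - ((p : ℤ) - i + 1)).toNat)
      (fun l => (p : ℤ) - i + 1 + l) ?_ ?_ ?_ ?_ ?_
    · intro j hj
      rw [Finset.mem_Icc] at hj
      rw [Finset.mem_range]
      omega
    · intro l hl
      rw [Finset.mem_range] at hl
      rw [Finset.mem_Icc]
      omega
    · intro j hj
      rw [Finset.mem_Icc] at hj
      omega
    · intro l hl
      rw [Finset.mem_range] at hl
      omega
    · intro j hj
      rw [Finset.mem_Icc] at hj
      have hl : (((j - ((p : ℤ) - i + 1)).toNat : ℤ)) = j - ((p : ℤ) - i + 1) :=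
        Int.toNat_of_nonneg (by omega)
      have e1 : 2 * (((j - ((p : ℤ) - i + 1)).toNat : ℤ)) - ((2 * i - 1 : ℕ) : ℤ) + 1
          = 2 * j - 2 * (p : ℤ) := by
        rw [hl, hcast]; ring
      rw [e1, ← zpow_neg, ← zpow_add₀ hq0, ← zpow_add₀ hq0,
        show 2 * (p : ℤ) + (2 * j - 2 * (p : ℤ)) = 2 * j by ring,
        show -(2 * (p : ℤ)) + -(2 * j - 2 * (p : ℤ)) = -(2 * j) by ring]
  -- Step B: the q-binomial theorem
  have hB := thmB (2 * i - 1) (q ^ (2 * (p : ℤ))) hy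
  -- Step C/D: match the two sums
  have hMain : ∑ k ∈ Finset.range (2 * i - 1 + 1),
        (-1 : F) ^ (2 * i - 1 + k) * qbinom (2 * i - 1) k
          * (q ^ (2 * (p : ℤ))) ^ (2 * (k : ℤ) - ((2 * i - 1 : ℕ) : ℤ))
      = ∑ k ∈ Finset.Icc 1 i,
          alpha i k * (q ^ ((2 * (2 * (k : ℤ) - 1)) * p) - q ^ (-((2 * (2 * (k : ℤ) - 1)) * p))) := by
    have hre : (2 * i - 1 + 1) = 2 * i := by omega
    rw [hre]
    have hsplit : ∑ k ∈ Finset.range (2 * i),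
          (-1 : F) ^ (2 * i - 1 + k) * qbinom (2 * i - 1) k
            * (q ^ (2 * (p : ℤ))) ^ (2 * (k : ℤ) - ((2 * i - 1 : ℕ) : ℤ))
        = (∑ k ∈ Finset.Ico 0 i,
            (-1 : F) ^ (2 * i - 1 + k) * qbinom (2 * i - 1) k
              * (q ^ (2 * (p : ℤ))) ^ (2 * (k : ℤ) - ((2 * i - 1 : ℕ) : ℤ)))
          + ∑ k ∈ Finset.Ico i (2 * i),
            (-1 : F) ^ (2 * i - 1 + k) * qbinom (2 * i - 1) k
              * (q ^ (2 * (p : ℤ))) ^ (2 * (k : ℤ) - ((2 * i - 1 : ℕ) : ℤ)) := by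
      rw [Finset.sum_Ico_consecutive _ (Nat.zero_le i) (by omega), Finset.range_eq_Ico]
    rw [hsplit]
    have hPos : ∑ k ∈ Finset.Ico i (2 * i),
          (-1 : F) ^ (2 * i - 1 + k) * qbinom (2 * i - 1) k
            * (q ^ (2 * (p : ℤ))) ^ (2 * (k : ℤ) - ((2 * i - 1 : ℕ) : ℤ))
        = ∑ k ∈ Finset.Icc 1 i, alpha i k * q ^ ((2 * (2 * (k : ℤ) - 1)) * p) := by
      refine Finset.sum_nbij' (fun k => k - i + 1) (fun k => i - 1 + k) ?_ ?_ ?_ ?_ ?_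
      · intro k hk; rw [Finset.mem_Ico] at hk; rw [Finset.mem_Icc]; omega
      · intro k hk; rw [Finset.mem_Icc] at hk; rw [Finset.mem_Ico]; omega
      · intro k hk; rw [Finset.mem_Ico] at hk; omega
      · intro k hk; rw [Finset.mem_Icc] at hk; omega
      · intro k hk
        rw [Finset.mem_Ico] at hk
        rw [alpha]
        have hsub : i - (k - i + 1) = 2 * i - 1 - k := by omega
        have hsign : ((-1 : F)) ^ (2 * i - 1 + k) = (-1) ^ (i - (k - i + 1)) := by
          rw [hsub]; exact neg_one_pow_parity _ _ (by omega)
        have hbin : qbinom (2 * i - 1) k = qbinom (2 * i - 1) (i - (k - i + 1)) := by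
          rw [hsub]; exact qbinom_symm (by omega)
        have hexp : (q ^ (2 * (p : ℤ))) ^ (2 * (k : ℤ) - ((2 * i - 1 : ℕ) : ℤ))
            = q ^ ((2 * (2 * ((k - i + 1 : ℕ) : ℤ) - 1)) * p) := by
          rw [← zpow_mul]
          have hc2 : ((k - i + 1 : ℕ) : ℤ) = (k : ℤ) - i + 1 := by omega
          rw [hcast, hc2,
            show 2 * (p : ℤ) * (2 * (k : ℤ) - (2 * (i : ℤ) - 1))
              = 2 * (2 * ((k : ℤ) - i + 1) - 1) * p by ring]
        rw [hsign, hbin, hexp]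
    have hNeg : ∑ k ∈ Finset.Ico 0 i,
          (-1 : F) ^ (2 * i - 1 + k) * qbinom (2 * i - 1) k
            * (q ^ (2 * (p : ℤ))) ^ (2 * (k : ℤ) - ((2 * i - 1 : ℕ) : ℤ))
        = ∑ k ∈ Finset.Icc 1 i, -(alpha i k * q ^ (-((2 * (2 * (k : ℤ) - 1)) * p))) := by
      refine Finset.sum_nbij' (fun k => i - k) (fun k => i - k) ?_ ?_ ?_ ?_ ?_
      · intro k hk; rw [Finset.mem_Ico] at hk; rw [Finset.mem_Icc]; omega
      · intro k hk; rw [Finset.mem_Icc] at hk; rw [Finset.mem_Ico]; omega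
      · intro k hk; rw [Finset.mem_Ico] at hk; omega
      · intro k hk; rw [Finset.mem_Icc] at hk; omega
      · intro k hk
        rw [Finset.mem_Ico] at hk
        rw [alpha]
        have hsub : i - (i - k) = k := by omega
        rw [hsub]
        have hsign : ((-1 : F)) ^ (2 * i - 1 + k) = -(-1 : F) ^ k := by
          rw [neg_one_pow_parity (2 * i - 1 + k) (k + 1) (by omega), pow_succ]
          ring
        have hexp : (q ^ (2 * (p : ℤ))) ^ (2 * (k : ℤ) - ((2 * i - 1 : ℕ) : ℤ))
            = q ^ (-((2 * (2 * ((i - k : ℕ) : ℤ) - 1)) * p)) := by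
          rw [← zpow_mul]
          have hc2 : ((i - k : ℕ) : ℤ) = (i : ℤ) - k := by omega
          rw [hcast, hc2,
            show 2 * (p : ℤ) * (2 * (k : ℤ) - (2 * (i : ℤ) - 1))
              = -((2 * (2 * ((i : ℤ) - k) - 1)) * p) by ring]
        rw [hsign, hexp]
        ring
    rw [hPos, hNeg, ← Finset.sum_add_distrib]
    refine Finset.sum_congr rfl fun k hk => by ring
  -- powers of the evaluation point
  have hpow : ∀ k : ℕ, ((-(q ^ (2 * (2 * (k : ℤ) - 1)))) ^ ((p : ℤ))
      = (-1 : F) ^ p * q ^ ((2 * (2 * (k : ℤ) - 1)) * (p : ℤ))) := by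
    intro k
    rw [zpow_natCast, neg_pow, ← zpow_natCast (q ^ (2 * (2 * (k : ℤ) - 1))) p, ← zpow_mul]
  have hpowneg : ∀ k : ℕ, ((-(q ^ (2 * (2 * (k : ℤ) - 1)))) ^ (-(p : ℤ))
      = (-1 : F) ^ p * q ^ (-((2 * (2 * (k : ℤ) - 1)) * (p : ℤ)))) := by
    intro k
    rw [zpow_neg, hpow k, mul_inv, zpow_neg]
    congr 1
    rw [← inv_pow, inv_neg, inv_one]
  have hterm : ∀ k ∈ Finset.Icc 1 i,
      alpha i k * ((-(q ^ (2 * (2 * (k : ℤ) - 1)))) ^ (p : ℤ)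
        - (-(q ^ (2 * (2 * (k : ℤ) - 1)))) ^ (-(p : ℤ)))
      = (-1 : F) ^ p * (alpha i k
          * (q ^ ((2 * (2 * (k : ℤ) - 1)) * p) - q ^ (-((2 * (2 * (k : ℤ) - 1)) * p)))) := by
    intro k hk
    rw [hpow k, hpowneg k]
    ring
  rw [cyc_eq p i hp hi, hA, hB, hMain, Finset.sum_congr rfl hterm, ← Finset.mul_sum]
  ring

theorem lemma32_coefficientwise (n i : ℕ) (hi : 1 ≤ i) :
    ∑ p ∈ Finset.Icc 1 n, (-1 : F) ^ p * a n (p : ℤ) * cyc p i =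
      (q ^ (2 : ℤ) - q ^ (-2 : ℤ))⁻¹ *
        ∑ k ∈ Finset.Icc 1 i, alpha i k * fev n (-(q ^ (2 * (2 * (k : ℤ) - 1)))) := by
  have hfev : ∀ c : F, fev n c
      = ∑ p ∈ Finset.Icc 1 n, a n (p : ℤ) * (c ^ (p : ℤ) - c ^ (-(p : ℤ))) := by
    intro c
    rw [fev]
    refine Finset.sum_nbij' (fun p => p.toNat) (fun p => (p : ℤ)) ?_ ?_ ?_ ?_ ?_
    · intro p hp; rw [Finset.mem_Icc] at hp ⊢; omega
    · intro p hp; rw [Finset.mem_Icc] at hp ⊢; omega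
    · intro p hp; rw [Finset.mem_Icc] at hp; omega
    · intro p hp; rw [Finset.mem_Icc] at hp; omega
    · intro p hp
      rw [Finset.mem_Icc] at hp
      have ht : ((p.toNat : ℤ)) = p := Int.toNat_of_nonneg (by omega)
      rw [ht]
  calc ∑ p ∈ Finset.Icc 1 n, (-1 : F) ^ p * a n (p : ℤ) * cyc p i
      = ∑ p ∈ Finset.Icc 1 n, a n (p : ℤ) * ((-1 : F) ^ p * cyc p i) := by
        refine Finset.sum_congr rfl fun p hp => by ring
    _ = ∑ p ∈ Finset.Icc 1 n, a n (p : ℤ) *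
          ((q ^ (2 : ℤ) - q ^ (-2 : ℤ))⁻¹ *
            ∑ k ∈ Finset.Icc 1 i, alpha i k
              * ((-(q ^ (2 * (2 * (k : ℤ) - 1)))) ^ (p : ℤ)
                - (-(q ^ (2 * (2 * (k : ℤ) - 1)))) ^ (-(p : ℤ)))) := by
        refine Finset.sum_congr rfl fun p hp => ?_
        rw [Finset.mem_Icc] at hp
        rw [key p i hp.1 hi]
    _ = ∑ p ∈ Finset.Icc 1 n, ∑ k ∈ Finset.Icc 1 i,
          (q ^ (2 : ℤ) - q ^ (-2 : ℤ))⁻¹ * (alpha i k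
            * (a n (p : ℤ) * ((-(q ^ (2 * (2 * (k : ℤ) - 1)))) ^ (p : ℤ)
              - (-(q ^ (2 * (2 * (k : ℤ) - 1)))) ^ (-(p : ℤ))))) := by
        refine Finset.sum_congr rfl fun p hp => ?_
        rw [Finset.mul_sum, Finset.mul_sum]
        refine Finset.sum_congr rfl fun k hk => by ring
    _ = ∑ k ∈ Finset.Icc 1 i, ∑ p ∈ Finset.Icc 1 n,
          (q ^ (2 : ℤ) - q ^ (-2 : ℤ))⁻¹ * (alpha i k
            * (a n (p : ℤ) * ((-(q ^ (2 * (2 * (k : ℤ) - 1)))) ^ (p : ℤ)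
              - (-(q ^ (2 * (2 * (k : ℤ) - 1)))) ^ (-(p : ℤ))))) :=
        Finset.sum_comm
    _ = ∑ k ∈ Finset.Icc 1 i,
          (q ^ (2 : ℤ) - q ^ (-2 : ℤ))⁻¹ *
            (alpha i k * fev n (-(q ^ (2 * (2 * (k : ℤ) - 1))))) := by
        refine Finset.sum_congr rfl fun k hk => ?_
        rw [← Finset.mul_sum, ← Finset.mul_sum, ← hfev]
    _ = (q ^ (2 : ℤ) - q ^ (-2 : ℤ))⁻¹ *
          ∑ k ∈ Finset.Icc 1 i, alpha i k * fev n (-(q ^ (2 * (2 * (k : ℤ) - 1)))) := by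
        rw [Finset.mul_sum]

end
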